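/- Boundary-term estimate in the proof of Theorem 4.5: There exists a constant C > 0, depending only on ρ, μ, α₁, β, γ, ξ₁, ξ₂, m₁, m₂ and L (and not on the resolvent data or λ), such that for every λ ∈ ℝ and all resolvent data, ρ|Φ(L)|² + α₁|V′(L)|² + μ|Θ(L)|² + β|γV′(L) − P′(L)|² ≤ C·(1 + λ²)·‖U‖·‖F‖ + C·‖F‖², where ‖U‖² = ∫₀ᴸ( ρ|Φ|² + μ|Θ|² + α₁|V′|² + β|γV′ − P′|² ) dx + m₁|u|² + m₂|η|² and ‖F‖² = ∫₀ᴸ( ρ|f₂|² + μ|f₄|² + α₁|f₁′|² + β|γf₁′ − f₃′|² ) dx + m₁|f₅|² + m₂|f₆|². -/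

import Mathlib

open Complex intervalIntegral MeasureTheory Set ComplexConjugate

/-- Resolvent data for the damped piezoelectric beam system with magnetic effect and
tip body: solutions of the resolvent (spectral) equation `iλU − AU = F` written in
components, together with the boundary conditions. -/
structure ResolventData (ρ μ β m₁ m₂ ξ₁ ξ₂ γ α₁ α L lam : ℝ) where
  V : ℝ → ℂ
  P : ℝ → ℂ
  Φ : ℝ → ℂ
  Θ : ℝ → ℂ
  f₁ : ℝ → ℂ
  f₂ : ℝ → ℂ
  f₃ : ℝ → ℂ
  f₄ : ℝ → ℂ
  u : ℂ
  η : ℂ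
  f₅ : ℂ
  f₆ : ℂ
  hV : ContDiff ℝ 2 V
  hP : ContDiff ℝ 2 P
  hΦ : ContDiff ℝ 1 Φ
  hΘ : ContDiff ℝ 1 Θ
  hf₁ : ContDiff ℝ 1 f₁
  hf₃ : ContDiff ℝ 1 f₃
  hf₂ : Continuous f₂
  hf₄ : Continuous f₄
  eq1 : ∀ x ∈ Set.Icc (0:ℝ) L, Complex.I * (lam : ℂ) * V x - Φ x = f₁ x
  eq2 : ∀ x ∈ Set.Icc (0:ℝ) L,
    Complex.I * (lam : ℂ) * (ρ : ℂ) * Φ x - (α : ℂ) * deriv (deriv V) x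
      + (γ : ℂ) * (β : ℂ) * deriv (deriv P) x = (ρ : ℂ) * f₂ x
  eq3 : ∀ x ∈ Set.Icc (0:ℝ) L, Complex.I * (lam : ℂ) * P x - Θ x = f₃ x
  eq4 : ∀ x ∈ Set.Icc (0:ℝ) L,
    Complex.I * (lam : ℂ) * (μ : ℂ) * Θ x - (β : ℂ) * deriv (deriv P) x
      + (γ : ℂ) * (β : ℂ) * deriv (deriv V) x = (μ : ℂ) * f₄ x
  bV0 : V 0 = 0
  bP0 : P 0 = 0
  bΦ0 : Φ 0 = 0
  bΘ0 : Θ 0 = 0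
  bΦL : Φ L = u
  bΘL : Θ L = η
  bu : (Complex.I * (lam : ℂ) * (m₁ : ℂ) + (ξ₁ : ℂ)) * u + (α : ℂ) * deriv V L
      - (γ : ℂ) * (β : ℂ) * deriv P L = (m₁ : ℂ) * f₅
  bη : (Complex.I * (lam : ℂ) * (m₂ : ℂ) + (ξ₂ : ℂ)) * η + (β : ℂ) * deriv P L
      - (γ : ℂ) * (β : ℂ) * deriv V L = (m₂ : ℂ) * f₆

variable {ρ μ β m₁ m₂ ξ₁ ξ₂ γ α₁ α L lam : ℝ}

/-- The squared interior norm `N²` of the resolvent data. -/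
noncomputable def Nsq (D : ResolventData ρ μ β m₁ m₂ ξ₁ ξ₂ γ α₁ α L lam) : ℝ :=
  ∫ x in (0:ℝ)..L,
    (ρ * ‖D.Φ x‖ ^ 2 + μ * ‖D.Θ x‖ ^ 2
      + α₁ * ‖deriv D.V x‖ ^ 2
      + β * ‖(γ : ℂ) * deriv D.V x - deriv D.P x‖ ^ 2)

/-- The squared state-space norm `‖U‖²` of the resolvent data. -/
noncomputable def Usq (D : ResolventData ρ μ β m₁ m₂ ξ₁ ξ₂ γ α₁ α L lam) : ℝ :=
  Nsq D + m₁ * ‖D.u‖ ^ 2 + m₂ * ‖D.η‖ ^ 2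

/-- The squared state-space norm `‖F‖²` of the right-hand side of the resolvent
equation. -/
noncomputable def Fsq (D : ResolventData ρ μ β m₁ m₂ ξ₁ ξ₂ γ α₁ α L lam) : ℝ :=
  (∫ x in (0:ℝ)..L,
      (ρ * ‖D.f₂ x‖ ^ 2 + μ * ‖D.f₄ x‖ ^ 2
        + α₁ * ‖deriv D.f₁ x‖ ^ 2
        + β * ‖(γ : ℂ) * deriv D.f₁ x - deriv D.f₃ x‖ ^ 2))
    + m₁ * ‖D.f₅‖ ^ 2 + m₂ * ‖D.f₆‖ ^ 2


/-- Cauchy-Schwarz for interval integrals of nonneg real functions. -/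
lemma cs_real {bb : ℝ} (hL : 0 ≤ bb) (f g : ℝ → ℝ) (hf : Continuous f) (hg : Continuous g)
    (hf0 : ∀ x, 0 ≤ f x) (hg0 : ∀ x, 0 ≤ g x) :
    (∫ x in (0:ℝ)..bb, f x * g x) ≤
      Real.sqrt (∫ x in (0:ℝ)..bb, f x ^ 2) * Real.sqrt (∫ x in (0:ℝ)..bb, g x ^ 2) := by
  set A := ∫ x in (0:ℝ)..bb, f x ^ 2 with hA
  set B := ∫ x in (0:ℝ)..bb, f x * g x with hB
  set C := ∫ x in (0:ℝ)..bb, g x ^ 2 with hC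
  have hquad : ∀ t : ℝ, 0 ≤ C * (t * t) + (-2 * B) * t + A := by
    intro t
    have h1 : (∫ x in (0:ℝ)..bb, (t * g x - f x) ^ 2) =
        C * (t * t) + (-2 * B) * t + A := by
      have : ∀ x : ℝ, (t * g x - f x) ^ 2 =
          (t*t) * g x ^ 2 + (-2*t) * (f x * g x) + f x ^ 2 := by intro x; ring
      rw [intervalIntegral.integral_congr (fun x _ => this x)]
      rw [intervalIntegral.integral_add, intervalIntegral.integral_add]
      · rw [intervalIntegral.integral_const_mul, intervalIntegral.integral_const_mul]
        ring
      · exact (continuous_const.mul (hg.pow 2)).intervalIntegrable 0 bb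
      · exact (continuous_const.mul (hf.mul hg)).intervalIntegrable 0 bb
      · exact ((continuous_const.mul (hg.pow 2)).add (continuous_const.mul (hf.mul hg))).intervalIntegrable 0 bb
      · exact (hf.pow 2).intervalIntegrable 0 bb
    rw [← h1]
    apply intervalIntegral.integral_nonneg hL
    intro x _; positivity
  have hd := discrim_le_zero hquad
  rw [discrim] at hd
  have hBC : B ^ 2 ≤ A * C := by nlinarith
  have hB0 : 0 ≤ B := intervalIntegral.integral_nonneg hL
    (fun x _ => mul_nonneg (hf0 x) (hg0 x))
  have hA0 : 0 ≤ A := intervalIntegral.integral_nonneg hL (fun x _ => sq_nonneg _)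
  calc B = Real.sqrt (B ^ 2) := (Real.sqrt_sq hB0).symm
    _ ≤ Real.sqrt (A * C) := Real.sqrt_le_sqrt hBC
    _ = Real.sqrt A * Real.sqrt C := Real.sqrt_mul hA0 _

/-- Cauchy-Schwarz for ∫ f ⬝ conj g. -/
lemma cs_complex {bb : ℝ} (hL : 0 ≤ bb) (f g : ℝ → ℂ) (hf : Continuous f) (hg : Continuous g) :
    ‖∫ x in (0:ℝ)..bb, f x * (starRingEnd ℂ) (g x)‖ ≤
      Real.sqrt (∫ x in (0:ℝ)..bb, ‖f x‖ ^ 2) * Real.sqrt (∫ x in (0:ℝ)..bb, ‖g x‖ ^ 2) := by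
  calc ‖∫ x in (0:ℝ)..bb, f x * (starRingEnd ℂ) (g x)‖
      ≤ ∫ x in (0:ℝ)..bb, ‖f x * (starRingEnd ℂ) (g x)‖ :=
        intervalIntegral.norm_integral_le_integral_norm hL
    _ = ∫ x in (0:ℝ)..bb, ‖f x‖ * ‖g x‖ := by
        apply intervalIntegral.integral_congr; intro x _
        simp [norm_mul]
    _ ≤ _ := cs_real hL _ _ hf.norm hg.norm (fun x => norm_nonneg _) (fun x => norm_nonneg _)

lemma term_bound {bb c F U : ℝ} (hL : 0 ≤ bb) (hc : 0 ≤ c) (f g : ℝ → ℂ)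
    (hf : Continuous f) (hg : Continuous g)
    (hF : c * ∫ x in (0:ℝ)..bb, ‖f x‖^2 ≤ F) (hU : c * ∫ x in (0:ℝ)..bb, ‖g x‖^2 ≤ U) :
    (∫ x in (0:ℝ)..bb, (c:ℂ) * f x * conj (g x)).re ≤ Real.sqrt U * Real.sqrt F := by
  set r := Real.sqrt c with hr
  have hr0 : 0 ≤ r := Real.sqrt_nonneg c
  have hrr : (r:ℂ) * (r:ℂ) = (c:ℂ) := by
    rw [← Complex.ofReal_mul, Real.mul_self_sqrt hc]
  have key : (∫ x in (0:ℝ)..bb, (c:ℂ) * f x * conj (g x))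
      = ∫ x in (0:ℝ)..bb, ((r:ℂ) * f x) * conj ((r:ℂ) * g x) := by
    apply intervalIntegral.integral_congr; intro x _
    simp only [map_mul, Complex.conj_ofReal]
    rw [← hrr]; ring
  have hnf : (∫ x in (0:ℝ)..bb, ‖(r:ℂ) * f x‖^2) = c * ∫ x in (0:ℝ)..bb, ‖f x‖^2 := by
    rw [← intervalIntegral.integral_const_mul]
    apply intervalIntegral.integral_congr; intro x _
    simp only [norm_mul, mul_pow, Complex.norm_real, Real.norm_eq_abs, _root_.abs_of_nonneg hr0]
    rw [hr, Real.sq_sqrt hc]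
  have hng : (∫ x in (0:ℝ)..bb, ‖(r:ℂ) * g x‖^2) = c * ∫ x in (0:ℝ)..bb, ‖g x‖^2 := by
    rw [← intervalIntegral.integral_const_mul]
    apply intervalIntegral.integral_congr; intro x _
    simp only [norm_mul, mul_pow, Complex.norm_real, Real.norm_eq_abs, _root_.abs_of_nonneg hr0]
    rw [hr, Real.sq_sqrt hc]
  have hcs := cs_complex hL (fun x => (r:ℂ) * f x) (fun x => (r:ℂ) * g x)
    (continuous_const.mul hf) (continuous_const.mul hg)
  rw [hnf, hng] at hcs
  calc (∫ x in (0:ℝ)..bb, (c:ℂ) * f x * conj (g x)).re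
      ≤ ‖∫ x in (0:ℝ)..bb, (c:ℂ) * f x * conj (g x)‖ := Complex.re_le_norm _
    _ = ‖∫ x in (0:ℝ)..bb, ((r:ℂ) * f x) * conj ((r:ℂ) * g x)‖ := by rw [key]
    _ ≤ Real.sqrt (c * ∫ x in (0:ℝ)..bb, ‖f x‖^2)
        * Real.sqrt (c * ∫ x in (0:ℝ)..bb, ‖g x‖^2) := hcs
    _ ≤ Real.sqrt F * Real.sqrt U :=
        mul_le_mul (Real.sqrt_le_sqrt hF) (Real.sqrt_le_sqrt hU) (Real.sqrt_nonneg _)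
          (Real.sqrt_nonneg _)
    _ = Real.sqrt U * Real.sqrt F := mul_comm _ _

lemma bterm_bound {m F U : ℝ} (hm : 0 ≤ m) (z v : ℂ)
    (hF : m * ‖z‖^2 ≤ F) (hU : m * ‖v‖^2 ≤ U) :
    ((m:ℂ) * z * conj v).re ≤ Real.sqrt U * Real.sqrt F := by
  have h1 : ((m:ℂ) * z * conj v).re ≤ m * ‖z‖ * ‖v‖ := by
    calc ((m:ℂ) * z * conj v).re ≤ ‖(m:ℂ) * z * conj v‖ := Complex.re_le_norm _
      _ = m * ‖z‖ * ‖v‖ := by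
          simp [norm_mul, Complex.norm_real, Real.norm_eq_abs, _root_.abs_of_nonneg hm]
  have h2 : m * ‖z‖ * ‖v‖ = Real.sqrt (m * ‖z‖^2) * Real.sqrt (m * ‖v‖^2) := by
    rw [Real.sqrt_mul hm, Real.sqrt_mul hm, Real.sqrt_sq (norm_nonneg _),
      Real.sqrt_sq (norm_nonneg _)]
    have hm' : Real.sqrt m * Real.sqrt m = m := Real.mul_self_sqrt hm
    linear_combination (-(‖z‖*‖v‖)) * hm'
  calc ((m:ℂ) * z * conj v).re ≤ Real.sqrt (m * ‖z‖^2) * Real.sqrt (m * ‖v‖^2) := by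
        rw [← h2]; exact h1
    _ ≤ Real.sqrt F * Real.sqrt U :=
        mul_le_mul (Real.sqrt_le_sqrt hF) (Real.sqrt_le_sqrt hU) (Real.sqrt_nonneg _)
          (Real.sqrt_nonneg _)
    _ = Real.sqrt U * Real.sqrt F := mul_comm _ _

lemma integral_mono_of_le {bb : ℝ} (hL : 0 ≤ bb) (a s : ℝ → ℝ) (ha : Continuous a)
    (hs : Continuous s) (h : ∀ x, a x ≤ s x) :
    (∫ x in (0:ℝ)..bb, a x) ≤ ∫ x in (0:ℝ)..bb, s x :=
  intervalIntegral.integral_mono_on hL (ha.intervalIntegrable 0 bb) (hs.intervalIntegrable 0 bb)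
    (fun x _ => h x)

lemma re_W (ρ μ β γ α₁ lam : ℝ) (a b c d e f : ℂ) :
    (Complex.I*(lam:ℂ)*((ρ:ℂ)*(a*conj a) + (μ:ℂ)*(b*conj b)
        + (α₁:ℂ)*(c*conj c)
        + (β:ℂ)*(((γ:ℂ)*c-d)*conj ((γ:ℂ)*c-d)))
      - (α₁:ℂ)*(e*conj c)
      - (β:ℂ)*(((γ:ℂ)*e-f)*conj ((γ:ℂ)*c-d))
      + ((α₁+γ^2*β : ℝ):ℂ)*(conj e*c) - (γ:ℂ)*(β:ℂ)*(conj e*d)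
      + (β:ℂ)*(conj f*d) - (γ:ℂ)*(β:ℂ)*(conj f*c)).re = 0 := by
  simp only [Complex.add_re, Complex.sub_re, Complex.mul_re, Complex.mul_im,
    Complex.conj_re, Complex.conj_im, Complex.I_re, Complex.I_im, Complex.ofReal_re,
    Complex.ofReal_im, Complex.add_im, Complex.sub_im]
  ring

lemma re_coef (m ξ : ℝ) (lam r : ℝ) :
    ((Complex.I * (lam:ℂ) * (m:ℂ) + (ξ:ℂ)) * ((r:ℝ):ℂ)).re = ξ * r := by
  simp [Complex.add_re, Complex.mul_re, Complex.I_re, Complex.I_im]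

lemma dissipation (hL : 0 < L)
    (hα : α = α₁ + γ ^ 2 * β)
    (D : ResolventData ρ μ β m₁ m₂ ξ₁ ξ₂ γ α₁ α L lam) :
    ξ₁ * Complex.normSq D.u + ξ₂ * Complex.normSq D.η =
      (∫ x in (0:ℝ)..L, (ρ:ℂ) * D.f₂ x * conj (D.Φ x)).re
      + (∫ x in (0:ℝ)..L, (μ:ℂ) * D.f₄ x * conj (D.Θ x)).re
      + (∫ x in (0:ℝ)..L, (α₁:ℂ) * deriv D.f₁ x * conj (deriv D.V x)).re
      + (∫ x in (0:ℝ)..L, (β:ℂ) * ((γ:ℂ) * deriv D.f₁ x - deriv D.f₃ x)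
            * conj ((γ:ℂ) * deriv D.V x - deriv D.P x)).re
      + ((m₁:ℂ) * D.f₅ * conj D.u).re + ((m₂:ℂ) * D.f₆ * conj D.η).re := by
  -- differentiability and continuity facts
  have hVd : Differentiable ℝ D.V := D.hV.differentiable two_ne_zero
  have hPd : Differentiable ℝ D.P := D.hP.differentiable two_ne_zero
  have hΦd : Differentiable ℝ D.Φ := D.hΦ.differentiable one_ne_zero
  have hΘd : Differentiable ℝ D.Θ := D.hΘ.differentiable one_ne_zero
  have hV'1 : ContDiff ℝ 1 (deriv D.V) := by
    have := (contDiff_succ_iff_deriv (n := 1)).mp (by exact_mod_cast D.hV)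
    exact this.2.2
  have hP'1 : ContDiff ℝ 1 (deriv D.P) := by
    have := (contDiff_succ_iff_deriv (n := 1)).mp (by exact_mod_cast D.hP)
    exact this.2.2
  have hV'c : Continuous (deriv D.V) := (hV'1.differentiable one_ne_zero).continuous
  have hP'c : Continuous (deriv D.P) := (hP'1.differentiable one_ne_zero).continuous
  have hV''c : Continuous (deriv (deriv D.V)) := hV'1.continuous_deriv le_rfl
  have hP''c : Continuous (deriv (deriv D.P)) := hP'1.continuous_deriv le_rfl
  have hΦ'c : Continuous (deriv D.Φ) := D.hΦ.continuous_deriv le_rfl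
  have hΘ'c : Continuous (deriv D.Θ) := D.hΘ.continuous_deriv le_rfl
  have hΦc : Continuous D.Φ := D.hΦ.continuous
  have hΘc : Continuous D.Θ := D.hΘ.continuous
  have hf₁'c : Continuous (deriv D.f₁) := D.hf₁.continuous_deriv le_rfl
  have hf₃'c : Continuous (deriv D.f₃) := D.hf₃.continuous_deriv le_rfl
  -- derivative of resolvent equations 1, 3 in the interior
  have hdf₁ : ∀ x ∈ Ioo (0:ℝ) L,
      deriv D.f₁ x = Complex.I*(lam:ℂ)*deriv D.V x - deriv D.Φ x := by
    intro x hx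
    have hev : D.f₁ =ᶠ[nhds x] fun y => Complex.I*(lam:ℂ)*D.V y - D.Φ y :=
      Filter.eventuallyEq_of_mem (Ioo_mem_nhds hx.1 hx.2)
        (fun y hy => (D.eq1 y (Ioo_subset_Icc_self hy)).symm)
    rw [hev.deriv_eq]
    exact (((hVd x).hasDerivAt.const_mul (Complex.I*(lam:ℂ))).sub (hΦd x).hasDerivAt).deriv
  have hdf₃ : ∀ x ∈ Ioo (0:ℝ) L,
      deriv D.f₃ x = Complex.I*(lam:ℂ)*deriv D.P x - deriv D.Θ x := by
    intro x hx
    have hev : D.f₃ =ᶠ[nhds x] fun y => Complex.I*(lam:ℂ)*D.P y - D.Θ y :=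
      Filter.eventuallyEq_of_mem (Ioo_mem_nhds hx.1 hx.2)
        (fun y hy => (D.eq3 y (Ioo_subset_Icc_self hy)).symm)
    rw [hev.deriv_eq]
    exact (((hPd x).hasDerivAt.const_mul (Complex.I*(lam:ℂ))).sub (hΘd x).hasDerivAt).deriv
  -- a.e. membership of the open interval
  have haeIoo : ∀ᵐ (x:ℝ), x ∈ uIoc (0:ℝ) L → x ∈ Ioo (0:ℝ) L := by
    have h0 : (volume ({L}:Set ℝ)) = 0 := Real.volume_singleton
    filter_upwards [measure_eq_zero_iff_ae_notMem.mp h0] with x hx hmem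
    rw [uIoc_of_le hL.le] at hmem
    exact ⟨hmem.1, lt_of_le_of_ne hmem.2 (by simpa using hx)⟩
  -- integration by parts helper
  have ibp : ∀ g w : ℝ → ℂ, ContDiff ℝ 1 g → ContDiff ℝ 1 (deriv w) →
      (∫ x in (0:ℝ)..L, (conj (deriv g x) * deriv w x + conj (g x) * deriv (deriv w) x))
        = conj (g L) * deriv w L - conj (g 0) * deriv w 0 := by
    intro g w hg hw'
    apply intervalIntegral.integral_deriv_mul_eq_sub
      (u := fun y => conj (g y)) (v := deriv w)
      (u' := fun y => conj (deriv g y)) (v' := deriv (deriv w))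
    · intro x _; exact ((hg.differentiable one_ne_zero) x).hasDerivAt.star
    · intro x _; exact ((hw'.differentiable one_ne_zero) x).hasDerivAt
    · exact ((hg.continuous_deriv le_rfl).star).intervalIntegrable _ _
    · exact (hw'.continuous_deriv le_rfl).intervalIntegrable _ _
  -- boundary (total derivative) integrals
  have htd1 := ibp D.Φ D.V D.hΦ hV'1
  have htd2 := ibp D.Φ D.P D.hΦ hP'1
  have htd3 := ibp D.Θ D.P D.hΘ hP'1
  have htd4 := ibp D.Θ D.V D.hΘ hV'1
  rw [D.bΦ0, D.bΦL] at htd1 htd2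
  rw [D.bΘ0, D.bΘL] at htd3 htd4
  simp only [map_zero, zero_mul, sub_zero] at htd1 htd2 htd3 htd4
  -- the purely imaginary interior density
  set W : ℝ → ℂ := fun x =>
    Complex.I*(lam:ℂ)*((ρ:ℂ)*(D.Φ x*conj (D.Φ x)) + (μ:ℂ)*(D.Θ x*conj (D.Θ x))
        + (α₁:ℂ)*(deriv D.V x*conj (deriv D.V x))
        + (β:ℂ)*(((γ:ℂ)*deriv D.V x-deriv D.P x)*conj ((γ:ℂ)*deriv D.V x-deriv D.P x)))
      - (α₁:ℂ)*(deriv D.Φ x*conj (deriv D.V x))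
      - (β:ℂ)*(((γ:ℂ)*deriv D.Φ x-deriv D.Θ x)*conj ((γ:ℂ)*deriv D.V x-deriv D.P x))
      + (α:ℂ)*(conj (deriv D.Φ x)*deriv D.V x)
      - (γ:ℂ)*(β:ℂ)*(conj (deriv D.Φ x)*deriv D.P x)
      + (β:ℂ)*(conj (deriv D.Θ x)*deriv D.P x)
      - (γ:ℂ)*(β:ℂ)*(conj (deriv D.Θ x)*deriv D.V x) with hW
  have hWc : Continuous W := by
    rw [hW]
    simp only [starRingEnd_apply]
    fun_prop
  have iW : IntervalIntegrable W volume 0 L := hWc.intervalIntegrable 0 L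
  have itd1c : Continuous (fun x => conj (deriv D.Φ x) * deriv D.V x
      + conj (D.Φ x) * deriv (deriv D.V) x) := (hΦ'c.star.mul hV'c).add (hΦc.star.mul hV''c)
  have itd2c : Continuous (fun x => conj (deriv D.Φ x) * deriv D.P x
      + conj (D.Φ x) * deriv (deriv D.P) x) := (hΦ'c.star.mul hP'c).add (hΦc.star.mul hP''c)
  have itd3c : Continuous (fun x => conj (deriv D.Θ x) * deriv D.P x
      + conj (D.Θ x) * deriv (deriv D.P) x) := (hΘ'c.star.mul hP'c).add (hΘc.star.mul hP''c)
  have itd4c : Continuous (fun x => conj (deriv D.Θ x) * deriv D.V x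
      + conj (D.Θ x) * deriv (deriv D.V) x) := (hΘ'c.star.mul hV'c).add (hΘc.star.mul hV''c)
  have ic1 : IntervalIntegrable (fun x => (-(α:ℂ)) * (conj (deriv D.Φ x) * deriv D.V x
      + conj (D.Φ x) * deriv (deriv D.V) x)) volume 0 L :=
    (continuous_const.mul itd1c).intervalIntegrable 0 L
  have ic2 : IntervalIntegrable (fun x => ((γ:ℂ)*(β:ℂ)) * (conj (deriv D.Φ x) * deriv D.P x
      + conj (D.Φ x) * deriv (deriv D.P) x)) volume 0 L :=
    (continuous_const.mul itd2c).intervalIntegrable 0 L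
  have ic3 : IntervalIntegrable (fun x => (-(β:ℂ)) * (conj (deriv D.Θ x) * deriv D.P x
      + conj (D.Θ x) * deriv (deriv D.P) x)) volume 0 L :=
    (continuous_const.mul itd3c).intervalIntegrable 0 L
  have ic4 : IntervalIntegrable (fun x => ((γ:ℂ)*(β:ℂ)) * (conj (deriv D.Θ x) * deriv D.V x
      + conj (D.Θ x) * deriv (deriv D.V) x)) volume 0 L :=
    (continuous_const.mul itd4c).intervalIntegrable 0 L
  have ig1 : IntervalIntegrable (fun x => (ρ:ℂ) * D.f₂ x * conj (D.Φ x)) volume 0 L :=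
    ((continuous_const.mul D.hf₂).mul hΦc.star).intervalIntegrable 0 L
  have ig2 : IntervalIntegrable (fun x => (μ:ℂ) * D.f₄ x * conj (D.Θ x)) volume 0 L :=
    ((continuous_const.mul D.hf₄).mul hΘc.star).intervalIntegrable 0 L
  have ig3 : IntervalIntegrable (fun x => (α₁:ℂ) * deriv D.f₁ x * conj (deriv D.V x))
      volume 0 L := ((continuous_const.mul hf₁'c).mul hV'c.star).intervalIntegrable 0 L
  have ig4 : IntervalIntegrable (fun x => (β:ℂ) * ((γ:ℂ) * deriv D.f₁ x - deriv D.f₃ x)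
      * conj ((γ:ℂ) * deriv D.V x - deriv D.P x)) volume 0 L :=
    ((continuous_const.mul ((continuous_const.mul hf₁'c).sub hf₃'c)).mul
      ((continuous_const.mul hV'c).sub hP'c).star).intervalIntegrable 0 L
  -- split the left-hand sum into one integral
  have hLsplit : (∫ x in (0:ℝ)..L, ((ρ:ℂ) * D.f₂ x * conj (D.Φ x)
        + (μ:ℂ) * D.f₄ x * conj (D.Θ x)
        + (α₁:ℂ) * deriv D.f₁ x * conj (deriv D.V x)
        + (β:ℂ) * ((γ:ℂ) * deriv D.f₁ x - deriv D.f₃ x)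
            * conj ((γ:ℂ) * deriv D.V x - deriv D.P x)))
      = (∫ x in (0:ℝ)..L, (ρ:ℂ) * D.f₂ x * conj (D.Φ x))
        + (∫ x in (0:ℝ)..L, (μ:ℂ) * D.f₄ x * conj (D.Θ x))
        + (∫ x in (0:ℝ)..L, (α₁:ℂ) * deriv D.f₁ x * conj (deriv D.V x))
        + (∫ x in (0:ℝ)..L, (β:ℂ) * ((γ:ℂ) * deriv D.f₁ x - deriv D.f₃ x)
            * conj ((γ:ℂ) * deriv D.V x - deriv D.P x)) := by
    rw [intervalIntegral.integral_add ((ig1.add ig2).add ig3) ig4,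
      intervalIntegral.integral_add (ig1.add ig2) ig3,
      intervalIntegral.integral_add ig1 ig2]
  -- split the right-hand sum into one integral
  have hRsplit : (∫ x in (0:ℝ)..L, (W x
        + (-(α:ℂ)) * (conj (deriv D.Φ x) * deriv D.V x + conj (D.Φ x) * deriv (deriv D.V) x)
        + ((γ:ℂ)*(β:ℂ)) * (conj (deriv D.Φ x) * deriv D.P x + conj (D.Φ x) * deriv (deriv D.P) x)
        + (-(β:ℂ)) * (conj (deriv D.Θ x) * deriv D.P x + conj (D.Θ x) * deriv (deriv D.P) x)
        + ((γ:ℂ)*(β:ℂ)) * (conj (deriv D.Θ x) * deriv D.V x + conj (D.Θ x) * deriv (deriv D.V) x)))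
      = (∫ x in (0:ℝ)..L, W x)
        + (-(α:ℂ)) * (∫ x in (0:ℝ)..L, (conj (deriv D.Φ x) * deriv D.V x
            + conj (D.Φ x) * deriv (deriv D.V) x))
        + ((γ:ℂ)*(β:ℂ)) * (∫ x in (0:ℝ)..L, (conj (deriv D.Φ x) * deriv D.P x
            + conj (D.Φ x) * deriv (deriv D.P) x))
        + (-(β:ℂ)) * (∫ x in (0:ℝ)..L, (conj (deriv D.Θ x) * deriv D.P x
            + conj (D.Θ x) * deriv (deriv D.P) x))
        + ((γ:ℂ)*(β:ℂ)) * (∫ x in (0:ℝ)..L, (conj (deriv D.Θ x) * deriv D.V x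
            + conj (D.Θ x) * deriv (deriv D.V) x)) := by
    rw [intervalIntegral.integral_add (((iW.add ic1).add ic2).add ic3) ic4,
      intervalIntegral.integral_add ((iW.add ic1).add ic2) ic3,
      intervalIntegral.integral_add (iW.add ic1) ic2,
      intervalIntegral.integral_add iW ic1,
      intervalIntegral.integral_const_mul, intervalIntegral.integral_const_mul,
      intervalIntegral.integral_const_mul, intervalIntegral.integral_const_mul]
  -- the pointwise identity in the interior
  have hae : (∫ x in (0:ℝ)..L, ((ρ:ℂ) * D.f₂ x * conj (D.Φ x)
        + (μ:ℂ) * D.f₄ x * conj (D.Θ x)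
        + (α₁:ℂ) * deriv D.f₁ x * conj (deriv D.V x)
        + (β:ℂ) * ((γ:ℂ) * deriv D.f₁ x - deriv D.f₃ x)
            * conj ((γ:ℂ) * deriv D.V x - deriv D.P x)))
      = (∫ x in (0:ℝ)..L, (W x
        + (-(α:ℂ)) * (conj (deriv D.Φ x) * deriv D.V x + conj (D.Φ x) * deriv (deriv D.V) x)
        + ((γ:ℂ)*(β:ℂ)) * (conj (deriv D.Φ x) * deriv D.P x + conj (D.Φ x) * deriv (deriv D.P) x)
        + (-(β:ℂ)) * (conj (deriv D.Θ x) * deriv D.P x + conj (D.Θ x) * deriv (deriv D.P) x)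
        + ((γ:ℂ)*(β:ℂ)) * (conj (deriv D.Θ x) * deriv D.V x + conj (D.Θ x) * deriv (deriv D.V) x))) := by
    apply intervalIntegral.integral_congr_ae
    filter_upwards [haeIoo] with x hx hmem
    have hIoo := hx hmem
    have h2 := D.eq2 x (Ioo_subset_Icc_self hIoo)
    have h4 := D.eq4 x (Ioo_subset_Icc_self hIoo)
    have h1' := hdf₁ x hIoo
    have h3' := hdf₃ x hIoo
    simp only [hW]
    rw [h1', h3', ← h2, ← h4]
    ring
  have hbig := hLsplit.symm.trans (hae.trans hRsplit)
  -- boundary conditions for the tip body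
  have hA₅ : (m₁:ℂ) * D.f₅ * conj D.u
      = ((Complex.I*(lam:ℂ)*(m₁:ℂ) + (ξ₁:ℂ)) * D.u + (α:ℂ)*deriv D.V L
          - (γ:ℂ)*(β:ℂ)*deriv D.P L) * conj D.u := by rw [D.bu]
  have hA₆ : (m₂:ℂ) * D.f₆ * conj D.η
      = ((Complex.I*(lam:ℂ)*(m₂:ℂ) + (ξ₂:ℂ)) * D.η + (β:ℂ)*deriv D.P L
          - (γ:ℂ)*(β:ℂ)*deriv D.V L) * conj D.η := by rw [D.bη]
  -- total identity
  have htotal : (∫ x in (0:ℝ)..L, (ρ:ℂ) * D.f₂ x * conj (D.Φ x))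
      + (∫ x in (0:ℝ)..L, (μ:ℂ) * D.f₄ x * conj (D.Θ x))
      + (∫ x in (0:ℝ)..L, (α₁:ℂ) * deriv D.f₁ x * conj (deriv D.V x))
      + (∫ x in (0:ℝ)..L, (β:ℂ) * ((γ:ℂ) * deriv D.f₁ x - deriv D.f₃ x)
          * conj ((γ:ℂ) * deriv D.V x - deriv D.P x))
      + ((m₁:ℂ) * D.f₅ * conj D.u) + ((m₂:ℂ) * D.f₆ * conj D.η)
      = (∫ x in (0:ℝ)..L, W x)
        + (Complex.I*(lam:ℂ)*(m₁:ℂ) + (ξ₁:ℂ)) * (D.u * conj D.u)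
        + (Complex.I*(lam:ℂ)*(m₂:ℂ) + (ξ₂:ℂ)) * (D.η * conj D.η) := by
    rw [hbig, hA₅, hA₆, htd1, htd2, htd3, htd4]
    ring
  -- real part of the interior integral vanishes
  have hWre : (∫ x in (0:ℝ)..L, W x).re = 0 := by
    have h2 := Complex.reCLM.intervalIntegral_comp_comm iW
    have h0 : ∀ x : ℝ, (W x).re = 0 := by
      intro x
      simp only [hW]
      rw [show ((α:ℝ):ℂ) = ((α₁+γ^2*β:ℝ):ℂ) from by rw [hα]]
      exact re_W ρ μ β γ α₁ lam (D.Φ x) (D.Θ x) (deriv D.V x) (deriv D.P x)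
        (deriv D.Φ x) (deriv D.Θ x)
    have h3 : (∫ x in (0:ℝ)..L, W x).re = ∫ x in (0:ℝ)..L, (W x).re := by
      simpa using h2.symm
    rw [h3]
    simp [h0]
  have re5 : ∀ (m ξ : ℝ) (z : ℂ),
      ((Complex.I*(lam:ℂ)*(m:ℂ) + (ξ:ℂ)) * (z * conj z)).re = ξ * Complex.normSq z := by
    intro m ξ z
    rw [Complex.mul_conj]
    exact re_coef m ξ lam (Complex.normSq z)
  rw [← Complex.add_re, ← Complex.add_re, ← Complex.add_re, ← Complex.add_re, ← Complex.add_re,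
    htotal, Complex.add_re, Complex.add_re, hWre, re5, re5]
  ring

set_option maxHeartbeats 1000000 in
/-- Boundary-term estimate in the proof of Theorem 4.5: the boundary energy density at
`x = L` is bounded by `C (1 + λ²) ‖U‖ ‖F‖ + C ‖F‖²`, where `C` depends only on the
physical constants and `L`, not on the resolvent data or on `λ`. -/
theorem boundary_term_estimate
    (ρ μ β m₁ m₂ ξ₁ ξ₂ γ α₁ α L : ℝ)
    (hρ : 0 < ρ) (hμ : 0 < μ) (hβ : 0 < β) (hm₁ : 0 < m₁) (hm₂ : 0 < m₂)
    (hξ₁ : 0 < ξ₁) (hξ₂ : 0 < ξ₂) (hL : 0 < L) (hα₁ : 0 < α₁)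
    (hα : α = α₁ + γ ^ 2 * β) :
    ∃ C > 0, ∀ (lam : ℝ) (D : ResolventData ρ μ β m₁ m₂ ξ₁ ξ₂ γ α₁ α L lam),
      ρ * ‖D.Φ L‖ ^ 2 + α₁ * ‖deriv D.V L‖ ^ 2
          + μ * ‖D.Θ L‖ ^ 2
          + β * ‖(γ : ℂ) * deriv D.V L - deriv D.P L‖ ^ 2
        ≤ C * (1 + lam ^ 2) * Real.sqrt (Usq D) * Real.sqrt (Fsq D) + C * Fsq D := by
  refine ⟨6*ρ/ξ₁ + 6*μ/ξ₂ + 18*(m₁^2+ξ₁^2)/(α₁*ξ₁)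
      + (3*γ^2/α₁ + 1/β)*(12*(m₂^2+ξ₂^2)/ξ₂)
      + (3*m₁/α₁ + (3*γ^2/α₁ + 1/β)*(2*m₂)) + 1, by positivity, ?_⟩
  intro lam D
  set C := 6*ρ/ξ₁ + 6*μ/ξ₂ + 18*(m₁^2+ξ₁^2)/(α₁*ξ₁)
      + (3*γ^2/α₁ + 1/β)*(12*(m₂^2+ξ₂^2)/ξ₂)
      + (3*m₁/α₁ + (3*γ^2/α₁ + 1/β)*(2*m₂)) + 1 with hC
  clear_value C
  -- continuity facts
  have hV'1 : ContDiff ℝ 1 (deriv D.V) := by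
    have := (contDiff_succ_iff_deriv (n := 1)).mp (by exact_mod_cast D.hV)
    exact this.2.2
  have hP'1 : ContDiff ℝ 1 (deriv D.P) := by
    have := (contDiff_succ_iff_deriv (n := 1)).mp (by exact_mod_cast D.hP)
    exact this.2.2
  have hV'c : Continuous (deriv D.V) := (hV'1.differentiable one_ne_zero).continuous
  have hP'c : Continuous (deriv D.P) := (hP'1.differentiable one_ne_zero).continuous
  have hΦc : Continuous D.Φ := D.hΦ.continuous
  have hΘc : Continuous D.Θ := D.hΘ.continuous
  have hf₁'c : Continuous (deriv D.f₁) := D.hf₁.continuous_deriv le_rfl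
  have hf₃'c : Continuous (deriv D.f₃) := D.hf₃.continuous_deriv le_rfl
  have hγVP : Continuous (fun x => (γ:ℂ)*deriv D.V x - deriv D.P x) :=
    (continuous_const.mul hV'c).sub hP'c
  have hγf : Continuous (fun x => (γ:ℂ)*deriv D.f₁ x - deriv D.f₃ x) :=
    (continuous_const.mul hf₁'c).sub hf₃'c
  have habs2 : ∀ (f : ℝ → ℂ), Continuous f → Continuous (fun x => ‖f x‖ ^ 2) :=
    fun f hf => hf.norm.pow 2
  have hnorm2 : ∀ (f : ℝ → ℂ), Continuous f → Continuous (fun x => ‖f x‖ ^ 2) :=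
    fun f hf => hf.norm.pow 2
  have hsU : Continuous (fun x => ρ * ‖D.Φ x‖ ^ 2 + μ * ‖D.Θ x‖ ^ 2
      + α₁ * ‖deriv D.V x‖ ^ 2
      + β * ‖(γ:ℂ) * deriv D.V x - deriv D.P x‖ ^ 2) :=
    (((continuous_const.mul (habs2 _ hΦc)).add (continuous_const.mul (habs2 _ hΘc))).add
      (continuous_const.mul (habs2 _ hV'c))).add (continuous_const.mul (habs2 _ hγVP))
  have hsF : Continuous (fun x => ρ * ‖D.f₂ x‖ ^ 2 + μ * ‖D.f₄ x‖ ^ 2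
      + α₁ * ‖deriv D.f₁ x‖ ^ 2
      + β * ‖(γ:ℂ) * deriv D.f₁ x - deriv D.f₃ x‖ ^ 2) :=
    (((continuous_const.mul (habs2 _ D.hf₂)).add (continuous_const.mul (habs2 _ D.hf₄))).add
      (continuous_const.mul (habs2 _ hf₁'c))).add (continuous_const.mul (habs2 _ hγf))
  have habsnn : ∀ z : ℂ, 0 ≤ ‖z‖ := fun z => norm_nonneg z
  -- nonnegativity of pieces
  have hu0 : (0:ℝ) ≤ m₁ * ‖D.u‖ ^ 2 :=
    mul_nonneg hm₁.le (pow_nonneg (habsnn _) 2)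
  have hη0 : (0:ℝ) ≤ m₂ * ‖D.η‖ ^ 2 :=
    mul_nonneg hm₂.le (pow_nonneg (habsnn _) 2)
  have hf₅0 : (0:ℝ) ≤ m₁ * ‖D.f₅‖ ^ 2 :=
    mul_nonneg hm₁.le (pow_nonneg (habsnn _) 2)
  have hf₆0 : (0:ℝ) ≤ m₂ * ‖D.f₆‖ ^ 2 :=
    mul_nonneg hm₂.le (pow_nonneg (habsnn _) 2)
  have hptnnU : ∀ x : ℝ, (0:ℝ) ≤ ρ * ‖D.Φ x‖ ^ 2 + μ * ‖D.Θ x‖ ^ 2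
      + α₁ * ‖deriv D.V x‖ ^ 2
      + β * ‖(γ:ℂ) * deriv D.V x - deriv D.P x‖ ^ 2 := fun x => by
    have h1 := mul_nonneg hρ.le (pow_nonneg (habsnn (D.Φ x)) 2)
    have h2 := mul_nonneg hμ.le (pow_nonneg (habsnn (D.Θ x)) 2)
    have h3 := mul_nonneg hα₁.le (pow_nonneg (habsnn (deriv D.V x)) 2)
    have h4 := mul_nonneg hβ.le (pow_nonneg (habsnn ((γ:ℂ) * deriv D.V x - deriv D.P x)) 2)
    linarith
  have hptnnF : ∀ x : ℝ, (0:ℝ) ≤ ρ * ‖D.f₂ x‖ ^ 2 + μ * ‖D.f₄ x‖ ^ 2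
      + α₁ * ‖deriv D.f₁ x‖ ^ 2
      + β * ‖(γ:ℂ) * deriv D.f₁ x - deriv D.f₃ x‖ ^ 2 := fun x => by
    have h1 := mul_nonneg hρ.le (pow_nonneg (habsnn (D.f₂ x)) 2)
    have h2 := mul_nonneg hμ.le (pow_nonneg (habsnn (D.f₄ x)) 2)
    have h3 := mul_nonneg hα₁.le (pow_nonneg (habsnn (deriv D.f₁ x)) 2)
    have h4 := mul_nonneg hβ.le (pow_nonneg (habsnn ((γ:ℂ) * deriv D.f₁ x - deriv D.f₃ x)) 2)
    linarith
  have hN0 : 0 ≤ Nsq D := by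
    rw [Nsq]
    exact intervalIntegral.integral_nonneg hL.le (fun x _ => hptnnU x)
  have hIF0 : 0 ≤ ∫ x in (0:ℝ)..L, (ρ * ‖D.f₂ x‖ ^ 2 + μ * ‖D.f₄ x‖ ^ 2
      + α₁ * ‖deriv D.f₁ x‖ ^ 2
      + β * ‖(γ:ℂ) * deriv D.f₁ x - deriv D.f₃ x‖ ^ 2) :=
    intervalIntegral.integral_nonneg hL.le (fun x _ => hptnnF x)
  -- component bounds
  have comp : ∀ (c : ℝ) (a s : ℝ → ℝ), Continuous a → Continuous s →
      (∀ x, c * a x ≤ s x) →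
      c * (∫ x in (0:ℝ)..L, a x) ≤ (∫ x in (0:ℝ)..L, s x) := by
    intro c a s hca hs hle
    rw [← intervalIntegral.integral_const_mul]
    exact integral_mono_of_le hL.le _ _ (continuous_const.mul hca) hs hle
  have hUΦ : ρ * (∫ x in (0:ℝ)..L, ‖D.Φ x‖^2) ≤ Usq D := by
    have h := comp ρ _ _ (hnorm2 _ hΦc) hsU (fun x => by
      have h2 := mul_nonneg hμ.le (pow_nonneg (habsnn (D.Θ x)) 2)
      have h3 := mul_nonneg hα₁.le (pow_nonneg (habsnn (deriv D.V x)) 2)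
      have h4 := mul_nonneg hβ.le (pow_nonneg (habsnn ((γ:ℂ) * deriv D.V x - deriv D.P x)) 2)
      linarith)
    rw [Usq, Nsq]; linarith
  have hUΘ : μ * (∫ x in (0:ℝ)..L, ‖D.Θ x‖^2) ≤ Usq D := by
    have h := comp μ _ _ (hnorm2 _ hΘc) hsU (fun x => by
      have h2 := mul_nonneg hρ.le (pow_nonneg (habsnn (D.Φ x)) 2)
      have h3 := mul_nonneg hα₁.le (pow_nonneg (habsnn (deriv D.V x)) 2)
      have h4 := mul_nonneg hβ.le (pow_nonneg (habsnn ((γ:ℂ) * deriv D.V x - deriv D.P x)) 2)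
      linarith)
    rw [Usq, Nsq]; linarith
  have hUV : α₁ * (∫ x in (0:ℝ)..L, ‖deriv D.V x‖^2) ≤ Usq D := by
    have h := comp α₁ _ _ (hnorm2 _ hV'c) hsU (fun x => by
      have h2 := mul_nonneg hρ.le (pow_nonneg (habsnn (D.Φ x)) 2)
      have h3 := mul_nonneg hμ.le (pow_nonneg (habsnn (D.Θ x)) 2)
      have h4 := mul_nonneg hβ.le (pow_nonneg (habsnn ((γ:ℂ) * deriv D.V x - deriv D.P x)) 2)
      linarith)
    rw [Usq, Nsq]; linarith
  have hUW : β * (∫ x in (0:ℝ)..L, ‖(γ:ℂ) * deriv D.V x - deriv D.P x‖^2) ≤ Usq D := by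
    have h := comp β _ _ (hnorm2 _ hγVP) hsU (fun x => by
      have h2 := mul_nonneg hρ.le (pow_nonneg (habsnn (D.Φ x)) 2)
      have h3 := mul_nonneg hμ.le (pow_nonneg (habsnn (D.Θ x)) 2)
      have h4 := mul_nonneg hα₁.le (pow_nonneg (habsnn (deriv D.V x)) 2)
      linarith)
    rw [Usq, Nsq]; linarith
  have hFf2 : ρ * (∫ x in (0:ℝ)..L, ‖D.f₂ x‖^2) ≤ Fsq D := by
    have h := comp ρ _ _ (hnorm2 _ D.hf₂) hsF (fun x => by
      have h2 := mul_nonneg hμ.le (pow_nonneg (habsnn (D.f₄ x)) 2)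
      have h3 := mul_nonneg hα₁.le (pow_nonneg (habsnn (deriv D.f₁ x)) 2)
      have h4 := mul_nonneg hβ.le (pow_nonneg (habsnn ((γ:ℂ) * deriv D.f₁ x - deriv D.f₃ x)) 2)
      linarith)
    rw [Fsq]; linarith
  have hFf4 : μ * (∫ x in (0:ℝ)..L, ‖D.f₄ x‖^2) ≤ Fsq D := by
    have h := comp μ _ _ (hnorm2 _ D.hf₄) hsF (fun x => by
      have h2 := mul_nonneg hρ.le (pow_nonneg (habsnn (D.f₂ x)) 2)
      have h3 := mul_nonneg hα₁.le (pow_nonneg (habsnn (deriv D.f₁ x)) 2)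
      have h4 := mul_nonneg hβ.le (pow_nonneg (habsnn ((γ:ℂ) * deriv D.f₁ x - deriv D.f₃ x)) 2)
      linarith)
    rw [Fsq]; linarith
  have hFf1 : α₁ * (∫ x in (0:ℝ)..L, ‖deriv D.f₁ x‖^2) ≤ Fsq D := by
    have h := comp α₁ _ _ (hnorm2 _ hf₁'c) hsF (fun x => by
      have h2 := mul_nonneg hρ.le (pow_nonneg (habsnn (D.f₂ x)) 2)
      have h3 := mul_nonneg hμ.le (pow_nonneg (habsnn (D.f₄ x)) 2)
      have h4 := mul_nonneg hβ.le (pow_nonneg (habsnn ((γ:ℂ) * deriv D.f₁ x - deriv D.f₃ x)) 2)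
      linarith)
    rw [Fsq]; linarith
  have hFfW : β * (∫ x in (0:ℝ)..L, ‖(γ:ℂ) * deriv D.f₁ x - deriv D.f₃ x‖^2) ≤ Fsq D := by
    have h := comp β _ _ (hnorm2 _ hγf) hsF (fun x => by
      have h2 := mul_nonneg hρ.le (pow_nonneg (habsnn (D.f₂ x)) 2)
      have h3 := mul_nonneg hμ.le (pow_nonneg (habsnn (D.f₄ x)) 2)
      have h4 := mul_nonneg hα₁.le (pow_nonneg (habsnn (deriv D.f₁ x)) 2)
      linarith)
    rw [Fsq]; linarith
  have hUu : m₁ * ‖D.u‖^2 ≤ Usq D := by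
    rw [Usq]; linarith
  have hUη : m₂ * ‖D.η‖^2 ≤ Usq D := by
    rw [Usq]; linarith
  have hFf5 : m₁ * ‖D.f₅‖^2 ≤ Fsq D := by
    rw [Fsq]; linarith
  have hFf6 : m₂ * ‖D.f₆‖^2 ≤ Fsq D := by
    rw [Fsq]; linarith
  have hU0 : 0 ≤ Usq D := by rw [Usq]; linarith
  have hF0 : 0 ≤ Fsq D := by rw [Fsq]; linarith
  -- dissipation estimate
  have hdiss := dissipation hL hα D
  have hb1 := term_bound hL.le hρ.le D.f₂ D.Φ D.hf₂ hΦc hFf2 hUΦ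
  have hb2 := term_bound hL.le hμ.le D.f₄ D.Θ D.hf₄ hΘc hFf4 hUΘ
  have hb3 := term_bound hL.le hα₁.le (deriv D.f₁) (deriv D.V) hf₁'c hV'c hFf1 hUV
  have hb4 := term_bound hL.le hβ.le (fun x => (γ:ℂ) * deriv D.f₁ x - deriv D.f₃ x)
    (fun x => (γ:ℂ) * deriv D.V x - deriv D.P x) hγf hγVP hFfW hUW
  have hb5 := bterm_bound hm₁.le D.f₅ D.u hFf5 hUu
  have hb6 := bterm_bound hm₂.le D.f₆ D.η hFf6 hUη
  have hns : ∀ z : ℂ, Complex.normSq z = ‖z‖^2 := fun z => by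
    rw [Complex.normSq_eq_norm_sq]
  rw [hns, hns] at hdiss
  have h6 : ξ₁ * ‖D.u‖^2 + ξ₂ * ‖D.η‖^2
      ≤ 6 * (Real.sqrt (Usq D) * Real.sqrt (Fsq D)) := by
    rw [hdiss]; linarith only [hb1, hb2, hb3, hb4, hb5, hb6]
  -- boundary algebra
  have hαc : (α:ℂ) = (α₁:ℂ) + (γ:ℂ)^2*(β:ℂ) := by rw [hα]; push_cast; ring
  have hw : (β:ℂ) * ((γ:ℂ)*deriv D.V L - deriv D.P L)
      = (Complex.I*(lam:ℂ)*(m₂:ℂ)+(ξ₂:ℂ))*D.η - (m₂:ℂ)*D.f₆ := by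
    linear_combination - D.bη
  have ha : (α₁:ℂ) * deriv D.V L = (m₁:ℂ)*D.f₅ - (Complex.I*(lam:ℂ)*(m₁:ℂ)+(ξ₁:ℂ))*D.u
      - (γ:ℂ)*((β:ℂ)*((γ:ℂ)*deriv D.V L - deriv D.P L)) := by
    linear_combination D.bu - (deriv D.V L) * hαc
  -- rewrite the goal
  rw [D.bΦL, D.bΘL]
  -- real abbreviations
  set R := Real.sqrt (Usq D) * Real.sqrt (Fsq D) with hRdef
  set KR := (1+lam^2) * R with hKRdef
  set NU := ‖D.u‖ with hNUdef
  set NE := ‖D.η‖ with hNEdef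
  set NA := ‖deriv D.V L‖ with hNAdef
  set NW := ‖(γ:ℂ)*deriv D.V L - deriv D.P L‖ with hNWdef
  set q5 := ‖D.f₅‖ with hq5def
  set q6 := ‖D.f₆‖ with hq6def
  set s1 := ‖Complex.I*(lam:ℂ)*(m₁:ℂ)+(ξ₁:ℂ)‖ with hs1def
  set s2 := ‖Complex.I*(lam:ℂ)*(m₂:ℂ)+(ξ₂:ℂ)‖ with hs2def
  have hR0 : 0 ≤ R := mul_nonneg (Real.sqrt_nonneg _) (Real.sqrt_nonneg _)
  have hKR0 : 0 ≤ KR := by rw [hKRdef]; exact mul_nonneg (by positivity) hR0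
  have hRKR : R ≤ KR := by rw [hKRdef]; nlinarith only [hR0, sq_nonneg lam]
  have hNU0 : 0 ≤ NU := norm_nonneg _
  have hNE0 : 0 ≤ NE := norm_nonneg _
  have hNA0 : 0 ≤ NA := norm_nonneg _
  have hNW0 : 0 ≤ NW := norm_nonneg _
  have hq50 : 0 ≤ q5 := norm_nonneg _
  have hq60 : 0 ≤ q6 := norm_nonneg _
  have hs10 : 0 ≤ s1 := norm_nonneg _
  have hs20 : 0 ≤ s2 := norm_nonneg _
  clear_value R KR NU NE NA NW q5 q6 s1 s2
  have hs1sq : s1^2 = lam^2*m₁^2+ξ₁^2 := by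
    rw [hs1def, Complex.sq_norm]
    simp [Complex.normSq_apply, Complex.add_re, Complex.add_im, Complex.mul_re, Complex.mul_im,
      Complex.I_re, Complex.I_im, Complex.ofReal_re, Complex.ofReal_im]
    ring
  have hs2sq : s2^2 = lam^2*m₂^2+ξ₂^2 := by
    rw [hs2def, Complex.sq_norm]
    simp [Complex.normSq_apply, Complex.add_re, Complex.add_im, Complex.mul_re, Complex.mul_im,
      Complex.I_re, Complex.I_im, Complex.ofReal_re, Complex.ofReal_im]
    ring
  -- bounds on NU, NE squared
  have hNU2 : NU^2 ≤ 6/ξ₁ * R := by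
    rw [div_mul_eq_mul_div, le_div_iff₀ hξ₁]
    linarith only [h6, mul_nonneg hξ₂.le (sq_nonneg NE)]
  have hNE2 : NE^2 ≤ 6/ξ₂ * R := by
    rw [div_mul_eq_mul_div, le_div_iff₀ hξ₂]
    linarith only [h6, mul_nonneg hξ₁.le (sq_nonneg NU)]
  have hs1K : s1^2 ≤ (m₁^2+ξ₁^2)*(1+lam^2) := by
    rw [hs1sq]; nlinarith only [sq_nonneg m₁, sq_nonneg (lam*ξ₁)]
  have hs2K : s2^2 ≤ (m₂^2+ξ₂^2)*(1+lam^2) := by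
    rw [hs2sq]; nlinarith only [sq_nonneg m₂, sq_nonneg (lam*ξ₂)]
  have hs1NU : (s1*NU)^2 ≤ (6*(m₁^2+ξ₁^2)/ξ₁)*KR := by
    calc (s1*NU)^2 = s1^2*NU^2 := by ring
      _ ≤ ((m₁^2+ξ₁^2)*(1+lam^2))*(6/ξ₁ * R) :=
          mul_le_mul hs1K hNU2 (sq_nonneg _) (by positivity)
      _ = (6*(m₁^2+ξ₁^2)/ξ₁)*KR := by rw [hKRdef]; ring
  have hs2NE : (s2*NE)^2 ≤ (6*(m₂^2+ξ₂^2)/ξ₂)*KR := by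
    calc (s2*NE)^2 = s2^2*NE^2 := by ring
      _ ≤ ((m₂^2+ξ₂^2)*(1+lam^2))*(6/ξ₂ * R) :=
          mul_le_mul hs2K hNE2 (sq_nonneg _) (by positivity)
      _ = (6*(m₂^2+ξ₂^2)/ξ₂)*KR := by rw [hKRdef]; ring
  have hq5b : (m₁*q5)^2 ≤ m₁*(Fsq D) := by nlinarith only [hFf5, hm₁.le]
  have hq6b : (m₂*q6)^2 ≤ m₂*(Fsq D) := by nlinarith only [hFf6, hm₂.le]
  -- triangle inequalities for the boundary terms
  have hBWeq : ‖(β:ℂ)*((γ:ℂ)*deriv D.V L - deriv D.P L)‖ = β*NW := by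
    rw [norm_mul, Complex.norm_real, Real.norm_eq_abs, _root_.abs_of_nonneg hβ.le, hNWdef]
  have hwabs : β*NW ≤ s2*NE + m₂*q6 := by
    rw [← hBWeq, hw]
    calc ‖(Complex.I*(lam:ℂ)*(m₂:ℂ)+(ξ₂:ℂ))*D.η - (m₂:ℂ)*D.f₆‖
        ≤ ‖(Complex.I*(lam:ℂ)*(m₂:ℂ)+(ξ₂:ℂ))*D.η‖ + ‖(m₂:ℂ)*D.f₆‖ := norm_sub_le _ _
      _ = s2*NE + m₂*q6 := by
          rw [norm_mul, norm_mul, Complex.norm_real, Real.norm_eq_abs,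
            _root_.abs_of_nonneg hm₂.le, hs2def, hNEdef, hq6def]
  have hαNAeq : ‖(α₁:ℂ)*deriv D.V L‖ = α₁*NA := by
    rw [norm_mul, Complex.norm_real, Real.norm_eq_abs, _root_.abs_of_nonneg hα₁.le, hNAdef]
  have haabs : α₁*NA ≤ m₁*q5 + s1*NU + |γ| * (β*NW) := by
    rw [← hαNAeq, ha]
    calc ‖(m₁:ℂ)*D.f₅ - (Complex.I*(lam:ℂ)*(m₁:ℂ)+(ξ₁:ℂ))*D.u
          - (γ:ℂ)*((β:ℂ)*((γ:ℂ)*deriv D.V L - deriv D.P L))‖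
        ≤ ‖(m₁:ℂ)*D.f₅ - (Complex.I*(lam:ℂ)*(m₁:ℂ)+(ξ₁:ℂ))*D.u‖
          + ‖(γ:ℂ)*((β:ℂ)*((γ:ℂ)*deriv D.V L - deriv D.P L))‖ := norm_sub_le _ _
      _ ≤ ‖(m₁:ℂ)*D.f₅‖ + ‖(Complex.I*(lam:ℂ)*(m₁:ℂ)+(ξ₁:ℂ))*D.u‖
          + ‖(γ:ℂ)*((β:ℂ)*((γ:ℂ)*deriv D.V L - deriv D.P L))‖ := by
            linarith [norm_sub_le ((m₁:ℂ)*D.f₅) ((Complex.I*(lam:ℂ)*(m₁:ℂ)+(ξ₁:ℂ))*D.u)]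
      _ = m₁*q5 + s1*NU + |γ| * (β*NW) := by
          rw [norm_mul, norm_mul, norm_mul, hBWeq, Complex.norm_real, Complex.norm_real,
            Real.norm_eq_abs, Real.norm_eq_abs, _root_.abs_of_nonneg hm₁.le,
            hs1def, hNUdef, hq5def]
  -- squared bounds
  have hBW2 : (β*NW)^2 ≤ 2*(s2*NE)^2 + 2*(m₂*q6)^2 := by
    nlinarith only [hwabs, sq_nonneg (s2*NE - m₂*q6), mul_nonneg hβ.le hNW0,
      mul_nonneg (mul_nonneg hs20 hNE0) (mul_nonneg hm₂.le hq60)]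
  have hNA2 : (α₁*NA)^2 ≤ 3*(m₁*q5)^2 + 3*(s1*NU)^2 + 3*γ^2*(β*NW)^2 := by
    have hg : |γ|^2 = γ^2 := sq_abs γ
    nlinarith only [hg, haabs, mul_nonneg hα₁.le hNA0, sq_nonneg (m₁*q5 - s1*NU),
      sq_nonneg (m₁*q5 - |γ| * (β*NW)), sq_nonneg (s1*NU - |γ| * (β*NW)),
      mul_nonneg (mul_nonneg hm₁.le hq50) (mul_nonneg hs10 hNU0),
      mul_nonneg (abs_nonneg γ) (mul_nonneg hβ.le hNW0)]
  have hNAeq : α₁*NA^2 = (1/α₁)*(α₁*NA)^2 := by field_simp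
  have hNWeq2 : β*NW^2 = (1/β)*(β*NW)^2 := by field_simp
  -- collect
  have hBW2' : (β*NW)^2 ≤ 2*((6*(m₂^2+ξ₂^2)/ξ₂)*KR) + 2*(m₂*(Fsq D)) := by
    linarith only [hBW2, hs2NE, hq6b]
  have pα : α₁*NA^2 ≤ (1/α₁)*(3*(m₁*(Fsq D)) + 3*((6*(m₁^2+ξ₁^2)/ξ₁)*KR)
      + 3*γ^2*(2*((6*(m₂^2+ξ₂^2)/ξ₂)*KR) + 2*(m₂*(Fsq D)))) := by
    rw [hNAeq]
    apply mul_le_mul_of_nonneg_left _ (by positivity)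
    have hγ2 : (0:ℝ) ≤ γ^2 := sq_nonneg γ
    linarith only [hNA2, hq5b, hs1NU, mul_le_mul_of_nonneg_left hBW2' hγ2]
  have pβ : β*NW^2 ≤ (1/β)*(2*((6*(m₂^2+ξ₂^2)/ξ₂)*KR) + 2*(m₂*(Fsq D))) := by
    rw [hNWeq2]
    exact mul_le_mul_of_nonneg_left hBW2' (by positivity)
  have pρ : ρ*NU^2 ≤ ρ*(6/ξ₁*R) := mul_le_mul_of_nonneg_left hNU2 hρ.le
  have pμ : μ*NE^2 ≤ μ*(6/ξ₂*R) := mul_le_mul_of_nonneg_left hNE2 hμ.le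
  -- final assembly
  have hA : ρ*NU^2 + α₁*NA^2 + μ*NE^2 + β*NW^2
      ≤ (6*ρ/ξ₁ + 6*μ/ξ₂)*R
        + (18*(m₁^2+ξ₁^2)/(α₁*ξ₁) + (3*γ^2/α₁ + 1/β)*(12*(m₂^2+ξ₂^2)/ξ₂))*KR
        + (3*m₁/α₁ + (3*γ^2/α₁ + 1/β)*(2*m₂))*(Fsq D) := by
    have e : (6*ρ/ξ₁ + 6*μ/ξ₂)*R
        + (18*(m₁^2+ξ₁^2)/(α₁*ξ₁) + (3*γ^2/α₁ + 1/β)*(12*(m₂^2+ξ₂^2)/ξ₂))*KR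
        + (3*m₁/α₁ + (3*γ^2/α₁ + 1/β)*(2*m₂))*(Fsq D)
        = ρ*(6/ξ₁*R) + μ*(6/ξ₂*R)
          + (1/α₁)*(3*(m₁*(Fsq D)) + 3*((6*(m₁^2+ξ₁^2)/ξ₁)*KR)
            + 3*γ^2*(2*((6*(m₂^2+ξ₂^2)/ξ₂)*KR) + 2*(m₂*(Fsq D))))
          + (1/β)*(2*((6*(m₂^2+ξ₂^2)/ξ₂)*KR) + 2*(m₂*(Fsq D))) := by
      field_simp
      ring
    rw [e]
    linarith only [pρ, pμ, pα, pβ]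
  have hcoef1 : (0:ℝ) ≤ (6*ρ/ξ₁ + 6*μ/ξ₂) := by positivity
  have hslack1 : (6*ρ/ξ₁ + 6*μ/ξ₂)*R ≤ (6*ρ/ξ₁ + 6*μ/ξ₂)*KR :=
    mul_le_mul_of_nonneg_left hRKR hcoef1
  have hslack2 : (6*ρ/ξ₁ + 6*μ/ξ₂
      + (18*(m₁^2+ξ₁^2)/(α₁*ξ₁) + (3*γ^2/α₁ + 1/β)*(12*(m₂^2+ξ₂^2)/ξ₂)))*KR ≤ C*KR := by
    apply mul_le_mul_of_nonneg_right _ hKR0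
    rw [hC]
    have h1 : (0:ℝ) ≤ 3*m₁/α₁ + (3*γ^2/α₁ + 1/β)*(2*m₂) := by positivity
    linarith
  have hslack3 : (3*m₁/α₁ + (3*γ^2/α₁ + 1/β)*(2*m₂))*(Fsq D) ≤ C*(Fsq D) := by
    apply mul_le_mul_of_nonneg_right _ hF0
    rw [hC]
    have h1 : (0:ℝ) ≤ 6*ρ/ξ₁ + 6*μ/ξ₂ + 18*(m₁^2+ξ₁^2)/(α₁*ξ₁)
        + (3*γ^2/α₁ + 1/β)*(12*(m₂^2+ξ₂^2)/ξ₂) := by positivity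
    linarith
  calc ρ*NU^2 + α₁*NA^2 + μ*NE^2 + β*NW^2
      ≤ C*KR + C*(Fsq D) := by linarith only [hA, hslack1, hslack2, hslack3]
    _ = C * (1+lam^2) * Real.sqrt (Usq D) * Real.sqrt (Fsq D) + C * Fsq D := by
        rw [hKRdef, hRdef]; ring
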